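/- Square matrices over a Kleene algebra form a Kleene algebra, with matrix addition, matrix multiplication, the identity and zero matrices, and a star operation defined by the standard block decomposition (for a 2×2 block matrix [[a,b],[c,d]], the star has top-left block (a + b·d*·c)*, etc.). -/

import Mathlib

set_option linter.unusedSectionVars false

structure IsKleeneAlgebra {X : Type*} (add mul : X → X → X) (star : X → X)
    (one zero : X) : Prop where
  add_assoc : ∀ x y z, add (add x y) z = add x (add y z)
  add_comm : ∀ x y, add x y = add y x
  add_idem : ∀ x, add x x = x
  add_zero : ∀ x, add x zero = x
  mul_assoc : ∀ x y z, mul (mul x y) z = mul x (mul y z)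
  one_mul : ∀ x, mul one x = x
  mul_one : ∀ x, mul x one = x
  zero_mul : ∀ x, mul zero x = zero
  mul_zero : ∀ x, mul x zero = zero
  left_distrib : ∀ x y z, mul x (add y z) = add (mul x y) (mul x z)
  right_distrib : ∀ x y z, mul (add x y) z = add (mul x z) (mul y z)
  star_unfold : ∀ x, add (add one (mul x (star x))) (star x) = star x
  star_ind_left : ∀ x y, add (mul y x) x = x → add (mul (star y) x) x = x
  star_ind_right : ∀ x y, add (mul x y) x = x → add (mul x (star y)) x = x


namespace MatrixKA
variable {X : Type} [KleeneAlgebra X]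

section Le
variable {ι κ ρ σ : Type}

def Le (A B : Matrix ι ρ X) : Prop := ∀ i j, A i j ≤ B i j

lemma le_iff_add {A B : Matrix ι ρ X} : Le A B ↔ A + B = B := by
  constructor
  · intro h; ext i j
    rw [Matrix.add_apply]
    exact add_eq_right_iff_le.2 (h i j)
  · intro h i j
    have := congrFun (congrFun h i) j
    rw [Matrix.add_apply] at this
    exact add_eq_right_iff_le.1 this

lemma Le.rfl {A : Matrix ι ρ X} : Le A A := fun _ _ => le_rfl

lemma Le.trans {A B C : Matrix ι ρ X} (h1 : Le A B) (h2 : Le B C) : Le A C :=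
  fun i j => (h1 i j).trans (h2 i j)

lemma le_of_eq_le {A B C : Matrix ι ρ X} (h : A = B) (h2 : Le B C) : Le A C := h ▸ h2
lemma le_of_le_eq {A B C : Matrix ι ρ X} (h : Le A B) (h2 : B = C) : Le A C := h2 ▸ h

lemma Le.addc {A B C D : Matrix ι ρ X} (h1 : Le A B) (h2 : Le C D) : Le (A + C) (B + D) :=
  fun i j => by rw [Matrix.add_apply, Matrix.add_apply]; exact add_le_add (h1 i j) (h2 i j)

lemma add_le' {A B C : Matrix ι ρ X} (h1 : Le A C) (h2 : Le B C) : Le (A + B) C :=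
  fun i j => by rw [Matrix.add_apply]; exact add_le (h1 i j) (h2 i j)

lemma le_add_self {A B : Matrix ι ρ X} : Le A (A + B) :=
  fun i j => by rw [Matrix.add_apply]; exact self_le_add_right _ _

lemma le_add_self' {A B : Matrix ι ρ X} : Le B (A + B) :=
  fun i j => by rw [Matrix.add_apply]; exact self_le_add_left _ _

lemma Le.left {A B C : Matrix ι ρ X} (h : Le (A + B) C) : Le A C :=
  Le.trans le_add_self h

lemma Le.right {A B C : Matrix ι ρ X} (h : Le (A + B) C) : Le B C :=
  Le.trans le_add_self' h

lemma Le.mul_right [Fintype ρ] {A B : Matrix ι ρ X} (h : Le A B) (C : Matrix ρ σ X) :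
    Le (A * C) (B * C) := fun i j => by
  rw [Matrix.mul_apply, Matrix.mul_apply]
  exact Finset.sum_le_sum fun k _ => mul_le_mul_left (h i k) _

lemma Le.mul_left [Fintype ρ] {A B : Matrix ρ σ X} (C : Matrix ι ρ X) (h : Le A B) :
    Le (C * A) (C * B) := fun i j => by
  rw [Matrix.mul_apply, Matrix.mul_apply]
  exact Finset.sum_le_sum fun k _ => mul_le_mul_right (h k j) _

lemma Le.submatrix {A B : Matrix κ ρ X} (h : Le A B) (f : ι → κ) (g : σ → ρ) :
    Le (A.submatrix f g) (B.submatrix f g) := fun i j => h (f i) (g j)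

end Le

structure StarGood (ι : Type) [Fintype ι] [DecidableEq ι]
    (s : Matrix ι ι X → Matrix ι ι X) : Prop where
  unfold : ∀ m, Le (1 + m * s m) (s m)
  ind_left : ∀ m {ρ : Type} (x : Matrix ι ρ X), Le (m * x) x → Le (s m * x) x
  ind_right : ∀ m {ρ : Type} (x : Matrix ρ ι X), Le (x * m) x → Le (x * s m) x

variable {ι κ : Type} [Fintype ι] [DecidableEq ι] [Fintype κ] [DecidableEq κ]

lemma StarGood.one_le {s} (h : StarGood (X := X) ι s) (m) : Le 1 (s m) :=
  Le.trans le_add_self (h.unfold m)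

lemma StarGood.mul_le {s} (h : StarGood (X := X) ι s) (m) : Le (m * s m) (s m) :=
  Le.trans le_add_self' (h.unfold m)

lemma StarGood.unique {s s'} (h : StarGood (X := X) ι s) (h' : StarGood (X := X) ι s') :
    s = s' := by
  have key : ∀ (s s' : Matrix ι ι X → Matrix ι ι X), StarGood ι s → StarGood ι s' →
      ∀ m, Le (s m) (s' m) := by
    intro s s' h h' m
    have h1 : Le (s m * s' m) (s' m) := h.ind_left m (s' m) (h'.mul_le m)
    have h2 : Le (s m * 1) (s m * s' m) := Le.mul_left (s m) (h'.one_le m)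
    rw [Matrix.mul_one] at h2
    exact h2.trans h1
  funext m
  ext i j
  exact le_antisymm (key s s' h h' m i j) (key s' s h' h m i j)

lemma starGood_empty [IsEmpty ι] : StarGood (X := X) ι (fun m => m) := by
  refine ⟨?_, ?_, ?_⟩
  · intro m i j; exact isEmptyElim i
  · intro m ρ x hx i j; exact isEmptyElim i
  · intro m ρ x hx i j; exact isEmptyElim j

def star1 (m : Matrix (Fin 1) (Fin 1) X) : Matrix (Fin 1) (Fin 1) X :=
  Matrix.of fun _ _ => KStar.kstar (m 0 0)

lemma mul1_apply {ρ : Type} (m : Matrix (Fin 1) (Fin 1) X) (x : Matrix (Fin 1) ρ X)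
    (i : Fin 1) (j : ρ) : (m * x) i j = m 0 0 * x 0 j := by
  rw [Matrix.mul_apply, Fin.sum_univ_one, Subsingleton.elim i 0]

lemma mul1_apply' {ρ : Type} (m : Matrix (Fin 1) (Fin 1) X) (x : Matrix ρ (Fin 1) X)
    (i : ρ) (j : Fin 1) : (x * m) i j = x i 0 * m 0 0 := by
  rw [Matrix.mul_apply, Fin.sum_univ_one, Subsingleton.elim j 0]

lemma starGood_one : StarGood (X := X) (Fin 1) star1 := by
  refine ⟨?_, ?_, ?_⟩
  · intro m i j
    rw [Matrix.add_apply, mul1_apply, Subsingleton.elim i 0, Subsingleton.elim j 0]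
    simp only [star1, Matrix.one_apply_eq, Matrix.of_apply]
    exact add_le one_le_kstar mul_kstar_le_kstar
  · intro m ρ x hx i j
    rw [mul1_apply, Subsingleton.elim i 0]
    show KStar.kstar (m 0 0) * x 0 j ≤ x 0 j
    refine kstar_mul_le_self ?_
    have := hx 0 j
    rwa [mul1_apply] at this
  · intro m ρ x hx i j
    rw [mul1_apply', Subsingleton.elim j 0]
    show x i 0 * KStar.kstar (m 0 0) ≤ x i 0
    refine mul_kstar_le_self ?_
    have := hx i 0
    rwa [mul1_apply'] at this

def transport (e : ι ≃ κ) (s : Matrix κ κ X → Matrix κ κ X) :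
    Matrix ι ι X → Matrix ι ι X :=
  fun m => ((s (m.submatrix e.symm e.symm)).submatrix e e)

lemma starGood_transport (e : ι ≃ κ) {s} (h : StarGood (X := X) κ s) :
    StarGood (X := X) ι (transport e s) := by
  refine ⟨?_, ?_, ?_⟩
  · intro m
    have hm : (m.submatrix ⇑e.symm ⇑e.symm).submatrix ⇑e ⇑e = m := by
      ext i j; simp
    set m' := m.submatrix ⇑e.symm ⇑e.symm with hm'
    have e2 : (m' * s m').submatrix ⇑e ⇑e = m * (s m').submatrix ⇑e ⇑e := by
      rw [← Matrix.submatrix_mul_equiv m' (s m') ⇑e e ⇑e, hm]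
    have H := (h.unfold m').submatrix ⇑e ⇑e
    refine le_of_eq_le ?_ H
    show 1 + m * (s m').submatrix ⇑e ⇑e = (1 + m' * s m').submatrix ⇑e ⇑e
    have e3 : (1 + m' * s m').submatrix ⇑e ⇑e
        = (1 : Matrix κ κ X).submatrix ⇑e ⇑e + (m' * s m').submatrix ⇑e ⇑e := rfl
    rw [e3, Matrix.submatrix_one_equiv, e2]
  · intro m ρ x hx
    set m' := m.submatrix ⇑e.symm ⇑e.symm with hm'
    set x' := x.submatrix ⇑e.symm _root_.id with hx'def
    have hx' : Le (m' * x') x' := by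
      have e3 : m' * x' = (m * x).submatrix ⇑e.symm _root_.id :=
        Matrix.submatrix_mul_equiv m x ⇑e.symm e.symm _root_.id
      exact le_of_eq_le e3 (hx.submatrix _ _)
    have H := (h.ind_left m' x' hx').submatrix ⇑e _root_.id
    have e4 : x'.submatrix ⇑e _root_.id = x := by ext i j; simp [hx'def]
    have e5 : (s m').submatrix ⇑e ⇑e * x = (s m' * x').submatrix ⇑e _root_.id := by
      rw [← Matrix.submatrix_mul_equiv (s m') x' ⇑e e _root_.id, e4]
    exact le_of_eq_le e5 (le_of_le_eq H e4)
  · intro m ρ x hx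
    set m' := m.submatrix ⇑e.symm ⇑e.symm with hm'
    set x' := x.submatrix _root_.id ⇑e.symm with hx'def
    have hx' : Le (x' * m') x' := by
      have e3 : x' * m' = (x * m).submatrix _root_.id ⇑e.symm :=
        Matrix.submatrix_mul_equiv x m _root_.id e.symm ⇑e.symm
      exact le_of_eq_le e3 (hx.submatrix _ _)
    have H := (h.ind_right m' x' hx').submatrix _root_.id ⇑e
    have e4 : x'.submatrix _root_.id ⇑e = x := by ext i j; simp [hx'def]
    have e5 : x * (s m').submatrix ⇑e ⇑e = (x' * s m').submatrix _root_.id ⇑e := by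
      rw [← Matrix.submatrix_mul_equiv x' (s m') _root_.id e ⇑e, e4]
    exact le_of_eq_le e5 (le_of_le_eq H e4)

section Blocks
variable {ρ : Type}

def topM (x : Matrix (ι ⊕ κ) ρ X) : Matrix ι ρ X := x.submatrix Sum.inl _root_.id
def botM (x : Matrix (ι ⊕ κ) ρ X) : Matrix κ ρ X := x.submatrix Sum.inr _root_.id
def lftM (x : Matrix ρ (ι ⊕ κ) X) : Matrix ρ ι X := x.submatrix _root_.id Sum.inl
def rgtM (x : Matrix ρ (ι ⊕ κ) X) : Matrix ρ κ X := x.submatrix _root_.id Sum.inr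

lemma le_of_tb {A B : Matrix (ι ⊕ κ) ρ X} (h1 : Le (topM A) (topM B))
    (h2 : Le (botM A) (botM B)) : Le A B := by
  intro i j
  cases i with
  | inl i => exact h1 i j
  | inr i => exact h2 i j

lemma le_of_lr {A B : Matrix ρ (ι ⊕ κ) X} (h1 : Le (lftM A) (lftM B))
    (h2 : Le (rgtM A) (rgtM B)) : Le A B := by
  intro i j
  cases j with
  | inl j => exact h1 i j
  | inr j => exact h2 i j

lemma fromBlocks_mul_top (a : Matrix ι ι X) (b : Matrix ι κ X) (c : Matrix κ ι X)
    (d : Matrix κ κ X) (x : Matrix (ι ⊕ κ) ρ X) :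
    topM (Matrix.fromBlocks a b c d * x) = a * topM x + b * botM x := by
  ext i j
  simp [topM, botM, Matrix.mul_apply, Matrix.add_apply, Fintype.sum_sum_type]

lemma fromBlocks_mul_bot (a : Matrix ι ι X) (b : Matrix ι κ X) (c : Matrix κ ι X)
    (d : Matrix κ κ X) (x : Matrix (ι ⊕ κ) ρ X) :
    botM (Matrix.fromBlocks a b c d * x) = c * topM x + d * botM x := by
  ext i j
  simp [topM, botM, Matrix.mul_apply, Matrix.add_apply, Fintype.sum_sum_type]

lemma lft_mul_fromBlocks (a : Matrix ι ι X) (b : Matrix ι κ X) (c : Matrix κ ι X)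
    (d : Matrix κ κ X) (x : Matrix ρ (ι ⊕ κ) X) :
    lftM (x * Matrix.fromBlocks a b c d) = lftM x * a + rgtM x * c := by
  ext i j
  simp [lftM, rgtM, Matrix.mul_apply, Matrix.add_apply, Fintype.sum_sum_type]

lemma rgt_mul_fromBlocks (a : Matrix ι ι X) (b : Matrix ι κ X) (c : Matrix κ ι X)
    (d : Matrix κ κ X) (x : Matrix ρ (ι ⊕ κ) X) :
    rgtM (x * Matrix.fromBlocks a b c d) = lftM x * b + rgtM x * d := by
  ext i j
  simp [lftM, rgtM, Matrix.mul_apply, Matrix.add_apply, Fintype.sum_sum_type]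

end Blocks

def blockStar (s1 : Matrix ι ι X → Matrix ι ι X) (s2 : Matrix κ κ X → Matrix κ κ X)
    (m : Matrix (ι ⊕ κ) (ι ⊕ κ) X) : Matrix (ι ⊕ κ) (ι ⊕ κ) X :=
  Matrix.fromBlocks
    (s1 (m.toBlocks₁₁ + m.toBlocks₁₂ * s2 m.toBlocks₂₂ * m.toBlocks₂₁))
    (s1 (m.toBlocks₁₁ + m.toBlocks₁₂ * s2 m.toBlocks₂₂ * m.toBlocks₂₁) * m.toBlocks₁₂
      * s2 m.toBlocks₂₂)
    (s2 m.toBlocks₂₂ * m.toBlocks₂₁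
      * s1 (m.toBlocks₁₁ + m.toBlocks₁₂ * s2 m.toBlocks₂₂ * m.toBlocks₂₁))
    (s2 m.toBlocks₂₂ + s2 m.toBlocks₂₂ * m.toBlocks₂₁
      * s1 (m.toBlocks₁₁ + m.toBlocks₁₂ * s2 m.toBlocks₂₂ * m.toBlocks₂₁) * m.toBlocks₁₂
      * s2 m.toBlocks₂₂)

lemma blockStar_fromBlocks (s1 : Matrix ι ι X → Matrix ι ι X)
    (s2 : Matrix κ κ X → Matrix κ κ X) (a : Matrix ι ι X) (b : Matrix ι κ X)
    (c : Matrix κ ι X) (d : Matrix κ κ X) :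
    blockStar s1 s2 (Matrix.fromBlocks a b c d) =
      Matrix.fromBlocks
        (s1 (a + b * s2 d * c))
        (s1 (a + b * s2 d * c) * b * s2 d)
        (s2 d * c * s1 (a + b * s2 d * c))
        (s2 d + s2 d * c * s1 (a + b * s2 d * c) * b * s2 d) := by
  simp [blockStar]

lemma le_fromBlocks {A A' : Matrix ι ι X} {B B' : Matrix ι κ X} {C C' : Matrix κ ι X}
    {D D' : Matrix κ κ X} (hA : Le A A') (hB : Le B B') (hC : Le C C') (hD : Le D D') :
    Le (Matrix.fromBlocks A B C D) (Matrix.fromBlocks A' B' C' D') := by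
  intro i j
  cases i <;> cases j <;> simp only [Matrix.fromBlocks_apply₁₁, Matrix.fromBlocks_apply₁₂,
    Matrix.fromBlocks_apply₂₁, Matrix.fromBlocks_apply₂₂]
  · exact hA _ _
  · exact hB _ _
  · exact hC _ _
  · exact hD _ _

lemma starGood_block {s1 s2} (h1 : StarGood (X := X) ι s1) (h2 : StarGood (X := X) κ s2) :
    StarGood (X := X) (ι ⊕ κ) (blockStar s1 s2) := by
  refine ⟨?_, ?_, ?_⟩
  · -- unfold
    suffices H : ∀ (a : Matrix ι ι X) (b : Matrix ι κ X) (c : Matrix κ ι X) (d : Matrix κ κ X),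
        Le (1 + Matrix.fromBlocks a b c d * blockStar s1 s2 (Matrix.fromBlocks a b c d))
          (blockStar s1 s2 (Matrix.fromBlocks a b c d)) by
      intro m
      have := H m.toBlocks₁₁ m.toBlocks₁₂ m.toBlocks₂₁ m.toBlocks₂₂
      rwa [Matrix.fromBlocks_toBlocks] at this
    intro a b c d
    rw [blockStar_fromBlocks]
    set ds := s2 d with hds
    set g := a + b * ds * c with hg
    set f := s1 g with hf
    have Hf : Le (1 + g * f) f := h1.unfold g
    have Hd : Le (1 + d * ds) ds := h2.unfold d
    rw [← Matrix.fromBlocks_one (l := ι) (m := κ), Matrix.fromBlocks_multiply,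
      Matrix.fromBlocks_add]
    refine le_fromBlocks ?_ ?_ ?_ ?_
    · refine le_of_eq_le ?_ Hf
      rw [hg]
      simp only [Matrix.add_mul, Matrix.mul_assoc]
    · refine le_of_eq_le ?_ (le_of_le_eq (Hf.mul_right (b * ds)) ?_)
      · rw [hg]
        simp only [Matrix.add_mul, Matrix.mul_add, Matrix.mul_assoc, Matrix.one_mul]
        abel
      · simp only [Matrix.mul_assoc]
    · refine le_of_eq_le ?_ (le_of_le_eq (Hd.mul_right (c * f)) ?_)
      · simp only [Matrix.add_mul, Matrix.mul_assoc, Matrix.one_mul]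
        abel
      · simp only [Matrix.mul_assoc]
    · refine le_of_eq_le ?_ (le_of_le_eq (Hd.addc (Hd.mul_right (c * f * b * ds))) ?_)
      · simp only [Matrix.add_mul, Matrix.mul_add, Matrix.mul_assoc, Matrix.one_mul]
        abel
      · simp only [Matrix.mul_add, Matrix.mul_assoc]
  · -- ind_left
    suffices H : ∀ (a : Matrix ι ι X) (b : Matrix ι κ X) (c : Matrix κ ι X) (d : Matrix κ κ X)
        {ρ : Type} (x : Matrix (ι ⊕ κ) ρ X), Le (Matrix.fromBlocks a b c d * x) x →
          Le (blockStar s1 s2 (Matrix.fromBlocks a b c d) * x) x by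
      intro m ρ x hx
      refine H m.toBlocks₁₁ m.toBlocks₁₂ m.toBlocks₂₁ m.toBlocks₂₂ x ?_
      rwa [Matrix.fromBlocks_toBlocks]
    intro a b c d ρ x hx
    rw [blockStar_fromBlocks]
    set ds := s2 d with hds
    set g := a + b * ds * c with hg
    set f := s1 g with hf
    set p := topM x with hp
    set r := botM x with hr
    have h_top : Le (a * p + b * r) p :=
      le_of_eq_le (fromBlocks_mul_top a b c d x).symm (hx.submatrix Sum.inl _root_.id)
    have h_bot : Le (c * p + d * r) r :=
      le_of_eq_le (fromBlocks_mul_bot a b c d x).symm (hx.submatrix Sum.inr _root_.id)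
    have hap : Le (a * p) p := h_top.left
    have hbr : Le (b * r) p := h_top.right
    have hcp : Le (c * p) r := h_bot.left
    have hdr : Le (d * r) r := h_bot.right
    have hdsr : Le (ds * r) r := h2.ind_left d r hdr
    have hgp : Le (g * p) p := by
      refine le_of_eq_le (show g * p = a * p + b * (ds * (c * p)) by
        rw [hg]; simp only [Matrix.add_mul, Matrix.mul_assoc]) ?_
      exact add_le' hap (((hcp.mul_left ds).trans hdsr).mul_left b |>.trans hbr)
    have hfp : Le (f * p) p := h1.ind_left g p hgp
    have hfbdsr : Le (f * (b * (ds * r))) p :=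
      (Le.mul_left f ((hdsr.mul_left b).trans hbr)).trans hfp
    refine le_of_tb ?_ ?_
    · refine le_of_eq_le (fromBlocks_mul_top _ _ _ _ x) ?_
      refine add_le' hfp ?_
      exact le_of_eq_le (by simp only [Matrix.mul_assoc]; rfl) hfbdsr
    · refine le_of_eq_le (fromBlocks_mul_bot _ _ _ _ x) ?_
      refine add_le' ?_ ?_
      · refine le_of_eq_le (show ds * c * f * p = ds * (c * (f * p)) by
          simp only [Matrix.mul_assoc]) ?_
        exact ((hfp.mul_left c |>.trans hcp).mul_left ds).trans hdsr
      · refine le_of_eq_le (show (ds + ds * c * f * b * ds) * r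
            = ds * r + ds * (c * (f * (b * (ds * r)))) by
          simp only [Matrix.add_mul, Matrix.mul_assoc]) ?_
        refine add_le' hdsr ?_
        exact ((hfbdsr.mul_left c |>.trans hcp).mul_left ds).trans hdsr
  · -- ind_right
    suffices H : ∀ (a : Matrix ι ι X) (b : Matrix ι κ X) (c : Matrix κ ι X) (d : Matrix κ κ X)
        {ρ : Type} (x : Matrix ρ (ι ⊕ κ) X), Le (x * Matrix.fromBlocks a b c d) x →
          Le (x * blockStar s1 s2 (Matrix.fromBlocks a b c d)) x by
      intro m ρ x hx
      refine H m.toBlocks₁₁ m.toBlocks₁₂ m.toBlocks₂₁ m.toBlocks₂₂ x ?_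
      rwa [Matrix.fromBlocks_toBlocks]
    intro a b c d ρ x hx
    rw [blockStar_fromBlocks]
    set ds := s2 d with hds
    set g := a + b * ds * c with hg
    set f := s1 g with hf
    set p := lftM x with hp
    set q := rgtM x with hq
    have h_l : Le (p * a + q * c) p :=
      le_of_eq_le (lft_mul_fromBlocks a b c d x).symm (hx.submatrix _root_.id Sum.inl)
    have h_r : Le (p * b + q * d) q :=
      le_of_eq_le (rgt_mul_fromBlocks a b c d x).symm (hx.submatrix _root_.id Sum.inr)
    have hpa : Le (p * a) p := h_l.left
    have hqc : Le (q * c) p := h_l.right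
    have hpb : Le (p * b) q := h_r.left
    have hqd : Le (q * d) q := h_r.right
    have hqds : Le (q * ds) q := h2.ind_right d q hqd
    have hpg : Le (p * g) p := by
      refine le_of_eq_le (show p * g = p * a + p * b * ds * c by
        rw [hg]; simp only [Matrix.mul_add, Matrix.mul_assoc]) ?_
      exact add_le' hpa ((((hpb.mul_right ds).trans hqds).mul_right c).trans hqc)
    have hpf : Le (p * f) p := h1.ind_right g p hpg
    have hqdscf : Le (q * ds * c * f) p :=
      (((hqds.mul_right c).trans hqc).mul_right f).trans hpf
    refine le_of_lr ?_ ?_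
    · refine le_of_eq_le (lft_mul_fromBlocks _ _ _ _ x) ?_
      refine add_le' hpf ?_
      exact le_of_eq_le (by simp only [Matrix.mul_assoc]; rfl) hqdscf
    · refine le_of_eq_le (rgt_mul_fromBlocks _ _ _ _ x) ?_
      refine add_le' ?_ ?_
      · refine le_of_eq_le (show p * (f * b * ds) = p * f * b * ds by
          simp only [Matrix.mul_assoc]) ?_
        exact (((hpf.mul_right b).trans hpb).mul_right ds).trans hqds
      · refine le_of_eq_le (show q * (ds + ds * c * f * b * ds)
            = q * ds + q * ds * c * f * b * ds by
          simp only [Matrix.mul_add, Matrix.mul_assoc]) ?_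
        refine add_le' hqds ?_
        exact (((hqdscf.mul_right b).trans hpb).mul_right ds).trans hqds

noncomputable def starFin : (n : ℕ) → Matrix (Fin n) (Fin n) X → Matrix (Fin n) (Fin n) X
  | 0 => fun m => m
  | n + 1 => transport (finSumFinEquiv (m := n) (n := 1)).symm
      (blockStar (starFin n) star1)

lemma starGood_starFin : ∀ n, StarGood (X := X) (Fin n) (starFin n)
  | 0 => starGood_empty
  | n + 1 => starGood_transport _ (starGood_block (starGood_starFin n) starGood_one)

noncomputable def Sdef (ι : Type) [Fintype ι] [DecidableEq ι] : Matrix ι ι X → Matrix ι ι X :=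
  transport (Fintype.equivFin ι) (starFin (Fintype.card ι))

lemma starGood_Sdef (ι : Type) [Fintype ι] [DecidableEq ι] :
    StarGood (X := X) ι (Sdef ι) :=
  starGood_transport _ (starGood_starFin _)

end MatrixKA

/-- Square matrices over a Kleene algebra form a Kleene algebra, with
matrix addition, multiplication, identity and zero matrices, and a star
operation satisfying the standard block decomposition: for a 2×2 block
matrix [[a,b],[c,d]], the top-left block of its star is (a + b·d*·c)*. -/
theorem matrix_kleeneAlgebra (X : Type) [KleeneAlgebra X] :
    ∃ S : ∀ (ι : Type) [Fintype ι] [DecidableEq ι],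
        Matrix ι ι X → Matrix ι ι X,
      (∀ (ι : Type) [Fintype ι] [DecidableEq ι],
        IsKleeneAlgebra (X := Matrix ι ι X) (· + ·) (· * ·) (S ι) 1 0)
      ∧ (∀ (x : X), S (Fin 1) (Matrix.of fun _ _ => x) 0 0 = KStar.kstar x)
      ∧ (∀ (ι κ : Type) [Fintype ι] [DecidableEq ι] [Fintype κ] [DecidableEq κ]
          (a : Matrix ι ι X) (b : Matrix ι κ X) (c : Matrix κ ι X) (d : Matrix κ κ X),
          (S (ι ⊕ κ) (Matrix.fromBlocks a b c d)).toBlocks₁₁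
            = S ι (a + b * S κ d * c)) := by
  refine ⟨fun ι _ _ => MatrixKA.Sdef ι, ?_, ?_, ?_⟩
  · intro ι _ _
    have h := MatrixKA.starGood_Sdef (X := X) ι
    refine ⟨fun x y z => add_assoc x y z, fun x y => add_comm x y, ?_,
      fun x => add_zero x, fun x y z => Matrix.mul_assoc x y z,
      fun x => Matrix.one_mul x, fun x => Matrix.mul_one x,
      fun x => Matrix.zero_mul x, fun x => Matrix.mul_zero x,
      fun x y z => Matrix.mul_add x y z, fun x y z => Matrix.add_mul x y z,
      ?_, ?_, ?_⟩
    · intro x; ext i j; rw [Matrix.add_apply]; exact add_idem _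
    · intro x; exact MatrixKA.le_iff_add.1 (h.unfold x)
    · intro x y hxy
      exact MatrixKA.le_iff_add.1 (h.ind_left y x (MatrixKA.le_iff_add.2 hxy))
    · intro x y hxy
      exact MatrixKA.le_iff_add.1 (h.ind_right y x (MatrixKA.le_iff_add.2 hxy))
  · intro x
    have h : MatrixKA.Sdef (X := X) (Fin 1) = MatrixKA.star1 :=
      (MatrixKA.starGood_Sdef (Fin 1)).unique MatrixKA.starGood_one
    beta_reduce
    rw [h]
    rfl
  · intro ι κ _ _ _ _ a b c d
    have h : MatrixKA.Sdef (X := X) (ι ⊕ κ)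
        = MatrixKA.blockStar (MatrixKA.Sdef ι) (MatrixKA.Sdef κ) :=
      (MatrixKA.starGood_Sdef _).unique
        (MatrixKA.starGood_block (MatrixKA.starGood_Sdef ι) (MatrixKA.starGood_Sdef κ))
    beta_reduce
    rw [h, MatrixKA.blockStar_fromBlocks]
    simp [Matrix.toBlocks_fromBlocks₁₁]
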